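/- If q² is a primitive l-th root of unity with l > 1, then A(α,β,γ) is a finitely generated module over the central subalgebra K[x^l, y^l, z^l], hence A(α,β,γ) satisfies a polynomial identity. -/

import Mathlib

noncomputable section

open FreeAlgebra

/-- The defining relations of the 3-cyclic quantum Weyl algebra `A(α,β,γ)`:
`xy = q²yx + α`, `xz = q⁻²zx + β`, `yz = q²zy + γ`. -/
inductive CQWRel (K : Type) [Field K] (q α β γ : K) :
    FreeAlgebra K (Fin 3) → FreeAlgebra K (Fin 3) → Prop
  | xy : CQWRel K q α β γ (ι K (0 : Fin 3) * ι K 1)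
      (q ^ 2 • (ι K (1 : Fin 3) * ι K 0) + algebraMap K _ α)
  | xz : CQWRel K q α β γ (ι K (0 : Fin 3) * ι K 2)
      (q⁻¹ ^ 2 • (ι K (2 : Fin 3) * ι K 0) + algebraMap K _ β)
  | yz : CQWRel K q α β γ (ι K (1 : Fin 3) * ι K 2)
      (q ^ 2 • (ι K (2 : Fin 3) * ι K 1) + algebraMap K _ γ)

/-- The 3-cyclic quantum Weyl algebra `A(α,β,γ)`. -/
abbrev CQW (K : Type) [Field K] (q α β γ : K) := RingQuot (CQWRel K q α β γ)

variable {K : Type} [Field K]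

/-- The generator `x` of `A(α,β,γ)`. -/
def Xg (q α β γ : K) : CQW K q α β γ := RingQuot.mkAlgHom K (CQWRel K q α β γ) (ι K 0)

/-- The generator `y` of `A(α,β,γ)`. -/
def Yg (q α β γ : K) : CQW K q α β γ := RingQuot.mkAlgHom K (CQWRel K q α β γ) (ι K 1)

/-- The generator `z` of `A(α,β,γ)`. -/
def Zg (q α β γ : K) : CQW K q α β γ := RingQuot.mkAlgHom K (CQWRel K q α β γ) (ι K 2)



section General

variable {K : Type} [Field K] {A : Type} [Ring A] [Algebra K A]

/-- Iterated commutation: if `a*b = s•(b*a) + t•1` then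
`a^(n+1) * b = s^(n+1) • (b * a^(n+1)) + ((∑ s^k) * t) • a^n`. -/
lemma pow_succ_mul_expand (a b : A) (s t : K) (h : a * b = s • (b * a) + t • 1) (n : ℕ) :
    a ^ (n + 1) * b = s ^ (n + 1) • (b * a ^ (n + 1)) +
      ((∑ k ∈ Finset.range (n + 1), s ^ k) * t) • a ^ n := by
  induction n with
  | zero => simpa using h
  | succ n ih =>
      have : a ^ (n + 2) * b = a * (a ^ (n + 1) * b) := by
        rw [pow_succ' a (n + 1), mul_assoc]
      rw [this, ih, mul_add, mul_smul_comm, mul_smul_comm, ← mul_assoc, h]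
      simp only [add_mul, smul_mul_assoc, one_mul, mul_assoc, Finset.sum_range_succ]
      simp only [← pow_succ']
      match_scalars <;> ring

/-- General expansion with a junk coefficient, valid for all `n`. -/
lemma pow_mul_expand (a b : A) (s t : K) (h : a * b = s • (b * a) + t • 1) (n : ℕ) :
    ∃ c : K, a ^ n * b = s ^ n • (b * a ^ n) + c • a ^ (n - 1) := by
  cases n with
  | zero => exact ⟨0, by simp⟩
  | succ n => exact ⟨_, pow_succ_mul_expand a b s t h n⟩

/-- A power of `a` is central (commutes with `b`) when `s^l = 1` and the geometric sum vanishes. -/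
lemma pow_comm_of_rel (a b : A) (s t : K) (h : a * b = s • (b * a) + t • 1)
    (l : ℕ) (hl : 0 < l) (hsl : s ^ l = 1) (hsum : ∑ k ∈ Finset.range l, s ^ k = 0) :
    a ^ l * b = b * a ^ l := by
  obtain ⟨n, rfl⟩ := Nat.exists_eq_add_of_lt hl
  rw [zero_add] at *
  rw [pow_succ_mul_expand a b s t h n, hsl, hsum, one_smul, zero_mul, zero_smul, add_zero]

/-- Reversing a commutation relation. -/
lemma flip_rel (a b : A) (s t : K) (h : a * b = s • (b * a) + t • 1) (hs : s ≠ 0) :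
    b * a = s⁻¹ • (a * b) + (-(s⁻¹ * t)) • 1 := by
  have key : s⁻¹ • (s • (b * a)) = b * a := by
    rw [smul_smul, inv_mul_cancel₀ hs, one_smul]
  calc b * a = s⁻¹ • (s • (b * a)) := key.symm
    _ = s⁻¹ • (a * b - t • 1) := by rw [h, add_sub_cancel_right]
    _ = s⁻¹ • (a * b) + (-(s⁻¹ * t)) • 1 := by
        rw [smul_sub, smul_smul, neg_smul, sub_eq_add_neg]

end General

section StdIdentity

variable {A : Type} [Ring A]

/-- The standard polynomial vanishes when two arguments are equal. -/
lemma std_alt {n : ℕ} (u : Fin n → A) (a b : Fin n) (hab : a ≠ b) (hu : u a = u b) :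
    ∑ σ : Equiv.Perm (Fin n),
      (Equiv.Perm.sign σ : ℤ) • (List.ofFn fun i => u (σ i)).prod = 0 := by
  classical
  set τ := Equiv.swap a b with hτ
  apply Finset.sum_ninvolution (fun σ => τ * σ)
  · intro σ
    have hfun : (fun i => u ((τ * σ) i)) = fun i => u (σ i) := by
      funext i
      show u (τ (σ i)) = u (σ i)
      rcases eq_or_ne (σ i) a with h | h
      · rw [h, hτ, Equiv.swap_apply_left, ← hu]
      rcases eq_or_ne (σ i) b with h' | h'
      · rw [h', hτ, Equiv.swap_apply_right, hu]
      · rw [hτ, Equiv.swap_apply_of_ne_of_ne h h']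
    have hprod : (List.ofFn fun i => u ((τ * σ) i)).prod
        = (List.ofFn fun i => u (σ i)).prod := by rw [hfun]
    have hsign : ((Equiv.Perm.sign (τ * σ) : ℤ)) = -(Equiv.Perm.sign σ : ℤ) := by
      rw [Equiv.Perm.sign_mul, hτ, Equiv.Perm.sign_swap hab]
      push_cast
      ring
    rw [hprod, hsign, neg_smul, add_neg_cancel]
  · intro σ _
    intro hτσ
    have : τ = 1 := by
      have := congrArg (fun ρ => ρ * σ⁻¹) hτσ
      simpa [mul_assoc] using this
    have : τ a = a := by rw [this]; rfl
    rw [hτ, Equiv.swap_apply_left] at this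
    exact hab this.symm
  · intro σ; exact Finset.mem_univ _
  · intro σ
    rw [← mul_assoc, hτ, Equiv.swap_mul_self, one_mul]

/-- Expansion of a product of sums (noncommutative). -/
lemma ofFn_prod_sum {J : Type} [Fintype J] :
    ∀ (n : ℕ) (g : Fin n → J → A),
      (List.ofFn fun i => ∑ j, g i j).prod
        = ∑ f : Fin n → J, (List.ofFn fun i => g i (f i)).prod := by
  intro n
  induction n with
  | zero =>
      intro g
      simp
  | succ n ih =>
      intro g
      rw [List.ofFn_succ, List.prod_cons, ih (fun i j => g i.succ j), Finset.sum_mul]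
      rw [show ∑ f : Fin (n+1) → J, (List.ofFn fun i => g i (f i)).prod
          = ∑ p : J × (Fin n → J), g 0 p.1 * (List.ofFn fun i => g i.succ (p.2 i)).prod from ?_]
      · rw [Fintype.sum_prod_type]
        refine Finset.sum_congr rfl fun f _ => ?_
        rw [Finset.mul_sum]
      · refine Fintype.sum_equiv (Fin.consEquiv (fun _ => J)).symm _ _ fun f => ?_
        simp [List.ofFn_succ, Fin.consEquiv, Fin.tail]

/-- Pull central coefficients out of an ordered product. -/
lemma central_pull :
    ∀ (n : ℕ) (r : Fin n → Subring.center A) (u : Fin n → A),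
      (List.ofFn fun i => (r i : A) * u i).prod
        = ((∏ i, r i : Subring.center A) : A) * (List.ofFn u).prod := by
  intro n
  induction n with
  | zero => intro r u; simp
  | succ n ih =>
      intro r u
      rw [List.ofFn_succ, List.prod_cons, ih (fun i => r i.succ) (fun i => u i.succ),
        Fin.prod_univ_succ]
      have hcomm : u 0 * ((∏ i : Fin n, r i.succ : Subring.center A) : A)
          = ((∏ i : Fin n, r i.succ : Subring.center A) : A) * u 0 :=
        Subring.mem_center_iff.mp (∏ i : Fin n, r i.succ).2 (u 0)
      push_cast
      rw [show (List.ofFn u).prod = u 0 * (List.ofFn fun i => u i.succ).prod by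
        rw [List.ofFn_succ, List.prod_cons]]
      calc (r 0 : A) * u 0 * (((∏ i : Fin n, r i.succ : Subring.center A) : A)
            * (List.ofFn fun i => u i.succ).prod)
          = (r 0 : A) * ((u 0 * ((∏ i : Fin n, r i.succ : Subring.center A) : A))
            * (List.ofFn fun i => u i.succ).prod) := by
            simp [mul_assoc]
        _ = _ := by rw [hcomm]; push_cast; simp [mul_assoc]

/-- Standard identity for a ring spanned by few elements over central coefficients. -/
lemma std_identity_of_span {J : Type} [Fintype J] (w : J → A)
    (hspan : ∀ a : A, ∃ c : J → Subring.center A, a = ∑ j, (c j : A) * w j)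
    (n : ℕ) (hn : Fintype.card J < n) (v : Fin n → A) :
    ∑ σ : Equiv.Perm (Fin n),
      (Equiv.Perm.sign σ : ℤ) • (List.ofFn fun i => v (σ i)).prod = 0 := by
  classical
  choose c hc using fun i => hspan (v i)
  have step1 : ∀ σ : Equiv.Perm (Fin n),
      (List.ofFn fun i => v (σ i)).prod
        = ∑ f : Fin n → J, ((∏ i, c (σ i) (f i) : Subring.center A) : A)
            * (List.ofFn fun i => w (f i)).prod := by
    intro σ
    have : (List.ofFn fun i => v (σ i)).prod
        = (List.ofFn fun i => ∑ j, (c (σ i) j : A) * w j).prod := by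
      have hfn : (fun i => v (σ i)) = fun i => ∑ j, (c (σ i) j : A) * w j :=
        funext fun i => hc (σ i)
      rw [hfn]
    rw [this, ofFn_prod_sum n (fun i j => (c (σ i) j : A) * w j)]
    exact Finset.sum_congr rfl fun f _ =>
      central_pull n (fun i => c (σ i) (f i)) (fun i => w (f i))
  have step2 : ∀ σ : Equiv.Perm (Fin n),
      (∑ f : Fin n → J, ((∏ i, c (σ i) (f i) : Subring.center A) : A)
          * (List.ofFn fun i => w (f i)).prod)
        = ∑ h : Fin n → J, ((∏ i, c i (h i) : Subring.center A) : A)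
            * (List.ofFn fun i => w (h (σ i))).prod := by
    intro σ
    refine (Fintype.sum_equiv (Equiv.arrowCongr σ.symm (Equiv.refl J)) _ _ fun h => ?_).symm
    have harr : ∀ i, (Equiv.arrowCongr σ.symm (Equiv.refl J)) h i = h (σ i) := by
      intro i; simp [Equiv.arrowCongr]
    have hprodc : (∏ i, c (σ i) ((Equiv.arrowCongr σ.symm (Equiv.refl J)) h i))
        = ∏ i, c i (h i) := by
      have : ∀ i, c (σ i) ((Equiv.arrowCongr σ.symm (Equiv.refl J)) h i)
          = c (σ i) (h (σ i)) := fun i => by rw [harr]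
      rw [Finset.prod_congr rfl fun i _ => this i]
      exact Equiv.prod_comp σ (fun i => c i (h i))
    have hwfn : (fun i => w ((Equiv.arrowCongr σ.symm (Equiv.refl J)) h i))
        = fun i => w (h (σ i)) := funext fun i => by rw [harr]
    rw [hprodc, hwfn]
  calc ∑ σ : Equiv.Perm (Fin n),
        (Equiv.Perm.sign σ : ℤ) • (List.ofFn fun i => v (σ i)).prod
      = ∑ σ : Equiv.Perm (Fin n), (Equiv.Perm.sign σ : ℤ) •
          ∑ h : Fin n → J, ((∏ i, c i (h i) : Subring.center A) : A)
            * (List.ofFn fun i => w (h (σ i))).prod := by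
        refine Finset.sum_congr rfl fun σ _ => ?_
        rw [step1 σ, step2 σ]
    _ = ∑ h : Fin n → J, ∑ σ : Equiv.Perm (Fin n),
          ((∏ i, c i (h i) : Subring.center A) : A)
            * ((Equiv.Perm.sign σ : ℤ) • (List.ofFn fun i => w (h (σ i))).prod) := by
        simp only [Finset.smul_sum, ← mul_smul_comm]
        exact Finset.sum_comm
    _ = ∑ h : Fin n → J, ((∏ i, c i (h i) : Subring.center A) : A)
          * ∑ σ : Equiv.Perm (Fin n),
            (Equiv.Perm.sign σ : ℤ) • (List.ofFn fun i => w (h (σ i))).prod := by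
        exact Finset.sum_congr rfl fun h _ => (Finset.mul_sum _ _ _).symm
    _ = 0 := by
        refine Finset.sum_eq_zero fun h _ => ?_
        obtain ⟨a, b, hab, hh⟩ := Fintype.exists_ne_map_eq_of_card_lt h (by simpa using hn)
        have hz : ∑ σ : Equiv.Perm (Fin n),
            (Equiv.Perm.sign σ : ℤ) • (List.ofFn fun i => w (h (σ i))).prod = 0 :=
          std_alt (fun i => w (h i)) a b hab (congrArg w hh)
        rw [hz, mul_zero]

end StdIdentity

lemma rearrange {A : Type} [Ring A] (u a' v b' w c' : A)
    (hv : ∀ t, Commute t v) (hw : ∀ t, Commute t w) :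
    (u * a') * (v * b') * (w * c') = (u * v * w) * (a' * b' * c') := by
  have hav : a' * v = v * a' := (hv a').eq
  have hbw : b' * w = w * b' := (hw b').eq
  have haw : a' * w = w * a' := (hw a').eq
  simp only [mul_assoc]
  congr 1
  rw [← mul_assoc a' v, hav, mul_assoc]
  congr 1
  rw [← mul_assoc b' w, hbw, mul_assoc, ← mul_assoc a' w, haw, mul_assoc]

section CQWFacts

variable (q α β γ : K)


lemma cqw_rel_xy : Xg q α β γ * Yg q α β γ
    = (q ^ 2) • (Yg q α β γ * Xg q α β γ) + α • (1 : CQW K q α β γ) := by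
  have h := RingQuot.mkAlgHom_rel K (CQWRel.xy (K := K) (q := q) (α := α) (β := β) (γ := γ))
  simp only [map_mul, map_add, map_smul, AlgHom.commutes] at h
  unfold Xg Yg
  rw [← Algebra.algebraMap_eq_smul_one]
  exact h

lemma cqw_rel_xz : Xg q α β γ * Zg q α β γ
    = ((q ^ 2)⁻¹) • (Zg q α β γ * Xg q α β γ) + β • (1 : CQW K q α β γ) := by
  have h := RingQuot.mkAlgHom_rel K (CQWRel.xz (K := K) (q := q) (α := α) (β := β) (γ := γ))
  simp only [map_mul, map_add, map_smul, AlgHom.commutes] at h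
  unfold Xg Zg
  rw [← Algebra.algebraMap_eq_smul_one, ← inv_pow]
  exact h

lemma cqw_rel_yz : Yg q α β γ * Zg q α β γ
    = (q ^ 2) • (Zg q α β γ * Yg q α β γ) + γ • (1 : CQW K q α β γ) := by
  have h := RingQuot.mkAlgHom_rel K (CQWRel.yz (K := K) (q := q) (α := α) (β := β) (γ := γ))
  simp only [map_mul, map_add, map_smul, AlgHom.commutes] at h
  unfold Yg Zg
  rw [← Algebra.algebraMap_eq_smul_one]
  exact h

lemma cqw_adjoin_top :
    Algebra.adjoin K ({Xg q α β γ, Yg q α β γ, Zg q α β γ} : Set (CQW K q α β γ)) = ⊤ := by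
  rw [eq_top_iff]
  rintro u -
  obtain ⟨w, rfl⟩ := RingQuot.mkAlgHom_surjective K (CQWRel K q α β γ) u
  induction w with
  | grade0 r =>
      rw [AlgHom.commutes]
      exact Subalgebra.algebraMap_mem _ r
  | grade1 i =>
      fin_cases i
      · exact Algebra.subset_adjoin (Set.mem_insert _ _)
      · exact Algebra.subset_adjoin (Set.mem_insert_of_mem _ (Set.mem_insert _ _))
      · exact Algebra.subset_adjoin
          (Set.mem_insert_of_mem _ (Set.mem_insert_of_mem _ rfl))
  | mul a b ha hb => rw [map_mul]; exact mul_mem ha hb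
  | add a b ha hb => rw [map_add]; exact add_mem ha hb

lemma cqw_mem_center (t : CQW K q α β γ)
    (hx : Xg q α β γ * t = t * Xg q α β γ)
    (hy : Yg q α β γ * t = t * Yg q α β γ)
    (hz : Zg q α β γ * t = t * Zg q α β γ) :
    t ∈ Subalgebra.center K (CQW K q α β γ) := by
  rw [Subalgebra.mem_center_iff]
  intro b
  have hb : b ∈ Algebra.adjoin K ({Xg q α β γ, Yg q α β γ, Zg q α β γ} :
      Set (CQW K q α β γ)) := by rw [cqw_adjoin_top]; trivial
  induction hb using Algebra.adjoin_induction with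
  | mem x hxx =>
      rcases hxx with rfl | rfl | rfl
      · exact hx
      · exact hy
      · exact hz
  | algebraMap r => exact Algebra.commutes r t
  | add x y _ _ h1 h2 => rw [add_mul, mul_add, h1, h2]
  | mul x y _ _ h1 h2 => rw [mul_assoc, h2, ← mul_assoc, h1, mul_assoc]

end CQWFacts
/-- If `q²` is a primitive `l`-th root of unity (`l > 1`), then `A(α,β,γ)` is a finitely
generated module over the central subalgebra `K[x^l, y^l, z^l]`; hence it satisfies a
(monic) polynomial identity, e.g. a standard identity. -/
theorem stmt10 (q α β γ : K) (l : ℕ) (hl : 1 < l) (hq : IsPrimitiveRoot (q ^ 2) l) :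
    Algebra.adjoin K ({Xg q α β γ ^ l, Yg q α β γ ^ l, Zg q α β γ ^ l} :
        Set (CQW K q α β γ)) ≤ Subalgebra.center K (CQW K q α β γ) ∧
    Module.Finite
      (Algebra.adjoin K ({Xg q α β γ ^ l, Yg q α β γ ^ l, Zg q α β γ ^ l} :
        Set (CQW K q α β γ)))
      (CQW K q α β γ) ∧
    ∃ n : ℕ, 0 < n ∧ ∀ v : Fin n → CQW K q α β γ,
      ∑ σ : Equiv.Perm (Fin n),
        (Equiv.Perm.sign σ : ℤ) • (List.ofFn fun i => v (σ i)).prod = 0 := by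
  classical
  have hl0 : 0 < l := Nat.lt_of_lt_of_le Nat.one_pos hl.le
  set x := Xg q α β γ with hxdef
  set y := Yg q α β γ with hydef
  set z := Zg q α β γ with hzdef
  -- basic facts about q
  have hq2l : (q ^ 2) ^ l = 1 := hq.pow_eq_one
  have hq2ne : q ^ 2 ≠ 0 := by
    intro h
    rw [h, zero_pow hl0.ne'] at hq2l
    exact zero_ne_one hq2l
  have hsum : ∑ k ∈ Finset.range l, (q ^ 2) ^ k = 0 := hq.geom_sum_eq_zero hl
  have hqi : IsPrimitiveRoot (q ^ 2)⁻¹ l := hq.inv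
  have hq2il : ((q ^ 2)⁻¹) ^ l = 1 := hqi.pow_eq_one
  have hsumi : ∑ k ∈ Finset.range l, ((q ^ 2)⁻¹) ^ k = 0 := hqi.geom_sum_eq_zero hl
  have hq2ine : (q ^ 2)⁻¹ ≠ 0 := inv_ne_zero hq2ne
  -- the defining relations
  have hxy := cqw_rel_xy q α β γ
  have hxz := cqw_rel_xz q α β γ
  have hyz := cqw_rel_yz q α β γ
  -- the flipped relations
  have hyx := flip_rel _ _ _ _ hxy hq2ne
  have hzx := flip_rel _ _ _ _ hxz hq2ine
  have hzy := flip_rel _ _ _ _ hyz hq2ne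
  rw [inv_inv] at hzx
  -- commutation of l-th powers with generators
  have hxl_y : x ^ l * y = y * x ^ l := pow_comm_of_rel _ _ _ _ hxy l hl0 hq2l hsum
  have hxl_z : x ^ l * z = z * x ^ l := pow_comm_of_rel _ _ _ _ hxz l hl0 hq2il hsumi
  have hyl_x : y ^ l * x = x * y ^ l := pow_comm_of_rel _ _ _ _ hyx l hl0 hq2il hsumi
  have hyl_z : y ^ l * z = z * y ^ l := pow_comm_of_rel _ _ _ _ hyz l hl0 hq2l hsum
  have hzl_x : z ^ l * x = x * z ^ l := pow_comm_of_rel _ _ _ _ hzx l hl0 hq2l hsum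
  have hzl_y : z ^ l * y = y * z ^ l := pow_comm_of_rel _ _ _ _ hzy l hl0 hq2il hsumi
  -- centrality of the l-th powers
  have hxc : x ^ l ∈ Subalgebra.center K (CQW K q α β γ) :=
    cqw_mem_center q α β γ _ ((Commute.refl x).pow_right l) hxl_y.symm hxl_z.symm
  have hyc : y ^ l ∈ Subalgebra.center K (CQW K q α β γ) :=
    cqw_mem_center q α β γ _ hyl_x.symm ((Commute.refl y).pow_right l) hyl_z.symm
  have hzc : z ^ l ∈ Subalgebra.center K (CQW K q α β γ) :=
    cqw_mem_center q α β γ _ hzl_x.symm hzl_y.symm ((Commute.refl z).pow_right l)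
  have hRc : Algebra.adjoin K ({x ^ l, y ^ l, z ^ l} : Set (CQW K q α β γ))
      ≤ Subalgebra.center K (CQW K q α β γ) := by
    apply Algebra.adjoin_le
    rintro t (rfl | rfl | rfl)
    · exact hxc
    · exact hyc
    · exact hzc
  -- the finite generating family of monomials
  set R := Algebra.adjoin K ({x ^ l, y ^ l, z ^ l} : Set (CQW K q α β γ)) with hRdef
  set gen : Fin l × Fin l × Fin l → CQW K q α β γ :=
    fun p => x ^ (p.1 : ℕ) * y ^ (p.2.1 : ℕ) * z ^ (p.2.2 : ℕ) with hgendef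
  set M : Submodule R (CQW K q α β γ) := Submodule.span R (Set.range gen) with hMdef
  -- Step 1 : every monomial lies in M
  have hxlR : x ^ l ∈ R := Algebra.subset_adjoin (Set.mem_insert _ _)
  have hylR : y ^ l ∈ R := Algebra.subset_adjoin (Set.mem_insert_of_mem _ (Set.mem_insert _ _))
  have hzlR : z ^ l ∈ R :=
    Algebra.subset_adjoin (Set.mem_insert_of_mem _ (Set.mem_insert_of_mem _ rfl))
  have hmonoM : ∀ a b c : ℕ, x ^ a * y ^ b * z ^ c ∈ M := by
    intro a b c
    have ha : a = l * (a / l) + a % l := (Nat.div_add_mod a l).symm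
    have hb : b = l * (b / l) + b % l := (Nat.div_add_mod b l).symm
    have hc : c = l * (c / l) + c % l := (Nat.div_add_mod c l).symm
    have key : x ^ a * y ^ b * z ^ c
        = ((x ^ l) ^ (a / l) * (y ^ l) ^ (b / l) * (z ^ l) ^ (c / l))
          * (x ^ (a % l) * y ^ (b % l) * z ^ (c % l)) := by
      conv_lhs => rw [ha, hb, hc]
      rw [pow_add, pow_mul, pow_add, pow_mul, pow_add, pow_mul]
      exact rearrange _ _ _ _ _ _
        (fun t => (show Commute t (y ^ l) from Subalgebra.mem_center_iff.mp hyc t).pow_right (b / l))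
        (fun t => (show Commute t (z ^ l) from Subalgebra.mem_center_iff.mp hzc t).pow_right (c / l))
    rw [key]
    have hr : (x ^ l) ^ (a / l) * (y ^ l) ^ (b / l) * (z ^ l) ^ (c / l) ∈ R :=
      mul_mem (mul_mem (pow_mem hxlR _) (pow_mem hylR _)) (pow_mem hzlR _)
    have hg : x ^ (a % l) * y ^ (b % l) * z ^ (c % l) ∈ Set.range gen :=
      ⟨(⟨a % l, Nat.mod_lt a hl0⟩, ⟨b % l, Nat.mod_lt b hl0⟩, ⟨c % l, Nat.mod_lt c hl0⟩), rfl⟩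
    have := M.smul_mem (⟨_, hr⟩ : R) (Submodule.subset_span hg)
    rwa [Subalgebra.smul_def, smul_eq_mul] at this
  -- Step 2 : the K-span of all monomials is everything
  set N : Submodule K (CQW K q α β γ) :=
    Submodule.span K (Set.range fun p : ℕ × ℕ × ℕ =>
      x ^ p.1 * y ^ p.2.1 * z ^ p.2.2) with hNdef
  have hmonoN : ∀ a b c : ℕ, x ^ a * y ^ b * z ^ c ∈ N :=
    fun a b c => Submodule.subset_span ⟨(a, b, c), rfl⟩
  -- expansion lemmas with junk coefficients
  have hgen_x : ∀ a b c : ℕ, (x ^ a * y ^ b * z ^ c) * x ∈ N := by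
    intro a b c
    obtain ⟨c1, hzxe⟩ := pow_mul_expand _ _ _ _ hzx c
    obtain ⟨c2, hyxe⟩ := pow_mul_expand _ _ _ _ hyx b
    have e1 : y ^ b * (x * z ^ c)
        = ((((q ^ 2)⁻¹) ^ b • (x * y ^ b) + c2 • y ^ (b - 1)) * z ^ c) := by
      rw [← mul_assoc, hyxe]
    have key : (x ^ a * y ^ b * z ^ c) * x
        = ((q ^ 2) ^ c * ((q ^ 2)⁻¹) ^ b) • (x ^ (a + 1) * y ^ b * z ^ c)
          + ((q ^ 2) ^ c * c2) • (x ^ a * y ^ (b - 1) * z ^ c)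
          + c1 • (x ^ a * y ^ b * z ^ (c - 1)) := by
      calc (x ^ a * y ^ b * z ^ c) * x
          = x ^ a * (y ^ b * (z ^ c * x)) := by simp only [mul_assoc]
        _ = x ^ a * (y ^ b * ((q ^ 2) ^ c • (x * z ^ c) + c1 • z ^ (c - 1))) := by rw [hzxe]
        _ = (q ^ 2) ^ c • (x ^ a * (y ^ b * (x * z ^ c)))
              + c1 • (x ^ a * (y ^ b * z ^ (c - 1))) := by
            simp only [mul_add, mul_smul_comm]
        _ = (q ^ 2) ^ c • (x ^ a * (((((q ^ 2)⁻¹) ^ b • (x * y ^ b) + c2 • y ^ (b - 1))) * z ^ c))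
              + c1 • (x ^ a * (y ^ b * z ^ (c - 1))) := by rw [e1]
        _ = _ := by
            simp only [add_mul, smul_mul_assoc, mul_add, mul_smul_comm, smul_smul,
              mul_assoc, pow_succ]
            match_scalars <;> ring
    rw [key]
    refine add_mem (add_mem (N.smul_mem _ (hmonoN _ _ _)) (N.smul_mem _ (hmonoN _ _ _)))
      (N.smul_mem _ (hmonoN _ _ _))
  have hgen_y : ∀ a b c : ℕ, (x ^ a * y ^ b * z ^ c) * y ∈ N := by
    intro a b c
    obtain ⟨c3, hzye⟩ := pow_mul_expand _ _ _ _ hzy c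
    have key : (x ^ a * y ^ b * z ^ c) * y
        = (((q ^ 2)⁻¹) ^ c) • (x ^ a * y ^ (b + 1) * z ^ c)
          + c3 • (x ^ a * y ^ b * z ^ (c - 1)) := by
      calc (x ^ a * y ^ b * z ^ c) * y
          = x ^ a * (y ^ b * (z ^ c * y)) := by simp only [mul_assoc]
        _ = x ^ a * (y ^ b * (((q ^ 2)⁻¹) ^ c • (y * z ^ c) + c3 • z ^ (c - 1))) := by rw [hzye]
        _ = _ := by
            simp only [mul_add, mul_smul_comm, mul_assoc, pow_succ]
    rw [key]
    exact add_mem (N.smul_mem _ (hmonoN _ _ _)) (N.smul_mem _ (hmonoN _ _ _))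
  have hgen_z : ∀ a b c : ℕ, (x ^ a * y ^ b * z ^ c) * z ∈ N := by
    intro a b c
    have key : (x ^ a * y ^ b * z ^ c) * z = x ^ a * y ^ b * z ^ (c + 1) := by
      rw [pow_succ, mul_assoc]
    rw [key]; exact hmonoN _ _ _
  have hclosed : ∀ g : CQW K q α β γ,
      (∀ a b c : ℕ, (x ^ a * y ^ b * z ^ c) * g ∈ N) → ∀ u ∈ N, u * g ∈ N := by
    intro g hg u hu
    induction hu using Submodule.span_induction with
    | mem u hu => obtain ⟨⟨a, b, c⟩, rfl⟩ := hu; exact hg a b c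
    | zero => rw [zero_mul]; exact N.zero_mem
    | add u v _ _ h1 h2 => rw [add_mul]; exact add_mem h1 h2
    | smul k u _ h => rw [smul_mul_assoc]; exact N.smul_mem _ h
  have hmulN : ∀ p : CQW K q α β γ, ∀ u ∈ N, u * p ∈ N := by
    intro p
    have hp : p ∈ Algebra.adjoin K ({x, y, z} : Set (CQW K q α β γ)) := by
      rw [cqw_adjoin_top]; trivial
    induction hp using Algebra.adjoin_induction with
    | mem g hg =>
        rcases hg with rfl | rfl | rfl
        · exact hclosed _ hgen_x
        · exact hclosed _ hgen_y
        · exact hclosed _ hgen_z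
    | algebraMap r =>
        intro u hu
        rw [← Algebra.commutes r u, ← Algebra.smul_def]
        exact N.smul_mem r hu
    | add p1 p2 _ _ h1 h2 =>
        intro u hu
        rw [mul_add]; exact add_mem (h1 u hu) (h2 u hu)
    | mul p1 p2 _ _ h1 h2 =>
        intro u hu
        rw [← mul_assoc]; exact h2 _ (h1 u hu)
  have hNtop : N = ⊤ := by
    rw [eq_top_iff]
    rintro p -
    have h1N : (1 : CQW K q α β γ) ∈ N := by simpa using hmonoN 0 0 0
    simpa using hmulN p 1 h1N
  -- M = ⊤
  have hMtop : M = ⊤ := by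
    rw [eq_top_iff]
    rintro u -
    have hu : u ∈ N := by rw [hNtop]; trivial
    induction hu using Submodule.span_induction with
    | mem u hu => obtain ⟨⟨a, b, c⟩, rfl⟩ := hu; exact hmonoM a b c
    | zero => exact M.zero_mem
    | add u v _ _ h1 h2 => exact add_mem h1 h2
    | smul k u _ h =>
        rw [← algebraMap_smul R k u]
        exact M.smul_mem _ h
  refine ⟨hRc, ?_, ?_⟩
  · exact ⟨⟨Finset.image gen Finset.univ, by
      rw [Finset.coe_image, Finset.coe_univ, Set.image_univ]
      exact hMtop⟩⟩
  · refine ⟨l * l * l + 1, Nat.succ_pos _, ?_⟩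
    apply std_identity_of_span gen ?_ (l * l * l + 1) ?_
    · intro a
      have ha : a ∈ Submodule.span R (Set.range gen) := by
        rw [← hMdef, hMtop]; trivial
      obtain ⟨cf, hcf⟩ := (Submodule.mem_span_range_iff_exists_fun (R := R)).mp ha
      refine ⟨fun j => ⟨(cf j : CQW K q α β γ), ?_⟩, ?_⟩
      · rw [Subring.mem_center_iff]
        intro g
        exact Subalgebra.mem_center_iff.mp (hRc (cf j).2) g
      · rw [← hcf]
        exact (Finset.sum_congr rfl fun j _ => by
          rw [Subalgebra.smul_def, smul_eq_mul]).symm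
    · rw [show Fintype.card (Fin l × Fin l × Fin l) = l * l * l by
        simp [Fintype.card_prod, mul_assoc]]
      exact Nat.lt_succ_self _
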